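/- Let H = H₀ + V be self-adjoint where H₀ ≥ 0 and V is bounded, and let v be an operator with v†v ≤ (2/m)(H₀ + w) for constants m > 0 and w ≥ 0 (in the sense of quadratic forms). Then for z not in the spectrum of H, the operator v(z−H)⁻¹ is bounded with ‖v(z−H)⁻¹‖² ≤ (2/m)[1/d + (|z| + ‖V‖ + w)/d²], where d = dist(z, spec H). -/

import Mathlib

/-- Resolvent regularization bound: if `H = H₀ + V` with `H₀ ≥ 0` self-adjoint
and `V` bounded self-adjoint, and `v` satisfies the form bound
`‖vψ‖² ≤ (2/m)(⟨ψ, H₀ψ⟩ + w‖ψ‖²)`, then for `z ∉ spec H`,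
`‖v (z-H)⁻¹‖² ≤ (2/m)(1/d + (|z| + ‖V‖ + w)/d²)` with `d = dist(z, spec H)`. -/
lemma resolvent_norm_le' {H : Type*} [NormedAddCommGroup H] [InnerProductSpace ℂ H]
    [CompleteSpace H]
    (a : H →L[ℂ] H) (ha : IsSelfAdjoint a) (z : ℂ) (hz : z ∉ spectrum ℂ a)
    (hd0 : 0 < Metric.infDist z (spectrum ℂ a)) :
    ‖Ring.inverse (algebraMap ℂ (H →L[ℂ] H) z - a)‖
      ≤ 1 / Metric.infDist z (spectrum ℂ a) := by
  have hne : ∀ x ∈ spectrum ℂ a, z - x ≠ 0 := by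
    intro x hx h
    exact hz (sub_eq_zero.mp h ▸ hx)
  have hfa : cfc (fun x : ℂ => z - x) a = algebraMap ℂ (H →L[ℂ] H) z - a := by
    rw [cfc_sub (fun _ : ℂ => z) (fun x : ℂ => x) a, cfc_const z a, cfc_id' ℂ a]
  have key : Ring.inverse (algebraMap ℂ (H →L[ℂ] H) z - a)
      = cfc (fun x : ℂ => (z - x)⁻¹) a := by
    rw [← hfa, cfc_inv (fun x : ℂ => z - x) a hne]
  rw [key]
  refine norm_cfc_le (by positivity) fun x hx => ?_
  have hd : Metric.infDist z (spectrum ℂ a) ≤ ‖z - x‖ := by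
    simpa [dist_eq_norm] using Metric.infDist_le_dist_of_mem hx
  rw [norm_inv, one_div]
  exact inv_anti₀ hd0 hd

set_option maxHeartbeats 1000000 in
theorem velocity_resolvent_bound
    {H : Type*} [NormedAddCommGroup H] [InnerProductSpace ℂ H] [CompleteSpace H]
    (Hop0 V v : H →L[ℂ] H) (m w : ℝ) (hm : 0 < m) (hw : 0 ≤ w)
    (hH0 : IsSelfAdjoint Hop0) (hV : IsSelfAdjoint V)
    (hpos : ∀ ψ : H, 0 ≤ (inner ℂ ψ (Hop0 ψ) : ℂ).re)
    (hform : ∀ ψ : H,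
      ‖v ψ‖ ^ 2 ≤ (2 / m) * ((inner ℂ ψ (Hop0 ψ) : ℂ).re + w * ‖ψ‖ ^ 2))
    (z : ℂ) (hz : z ∉ spectrum ℂ (Hop0 + V))
    (hd : 0 < Metric.infDist z (spectrum ℂ (Hop0 + V))) :
    ‖v * Ring.inverse (algebraMap ℂ (H →L[ℂ] H) z - (Hop0 + V))‖ ^ 2
      ≤ (2 / m) * (1 / Metric.infDist z (spectrum ℂ (Hop0 + V))
          + (‖z‖ + ‖V‖ + w) / Metric.infDist z (spectrum ℂ (Hop0 + V)) ^ 2) := by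
  set a := Hop0 + V with ha_def
  set d := Metric.infDist z (spectrum ℂ a) with hd_def
  have ha : IsSelfAdjoint a := hH0.add hV
  set R := Ring.inverse (algebraMap ℂ (H →L[ℂ] H) z - a) with hR_def
  have hR : ‖R‖ ≤ 1 / d := resolvent_norm_le' a ha z hz hd
  have hzu : IsUnit (algebraMap ℂ (H →L[ℂ] H) z - a) :=
    spectrum.notMem_iff.mp hz
  have huR : (algebraMap ℂ (H →L[ℂ] H) z - a) * R = 1 :=
    Ring.mul_inverse_cancel _ hzu
  set C := (2 / m) * (1 / d + (‖z‖ + ‖V‖ + w) / d ^ 2) with hC_def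
  have hC : 0 ≤ C := by
    have : (0:ℝ) ≤ ‖z‖ + ‖V‖ + w := by positivity
    positivity
  have hmain : ‖v * R‖ ≤ Real.sqrt C := by
    refine ContinuousLinearMap.opNorm_le_bound _ (Real.sqrt_nonneg C) fun φ => ?_
    set ψ := R φ with hψ_def
    have hψn : ‖ψ‖ ≤ (1 / d) * ‖φ‖ :=
      le_trans (R.le_opNorm φ) (by
        exact mul_le_mul_of_nonneg_right hR (norm_nonneg φ))
    have haψ : a ψ = z • ψ - φ := by
      have h1 : (algebraMap ℂ (H →L[ℂ] H) z - a) ψ = φ := by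
        have := congrArg (fun T : H →L[ℂ] H => T φ) huR
        simpa [ContinuousLinearMap.mul_apply] using this
      have h2 : z • ψ - a ψ = φ := by
        simpa [ContinuousLinearMap.sub_apply, Algebra.algebraMap_eq_smul_one] using h1
      linear_combination (norm := module) -h2
    -- estimate Re⟨ψ, Hop0 ψ⟩ + w‖ψ‖²
    have hsum : (inner ℂ ψ (a ψ) : ℂ) = inner ℂ ψ (Hop0 ψ) + inner ℂ ψ (V ψ) := by
      rw [ha_def]; simp [inner_add_right]
    have hre : (inner ℂ ψ (Hop0 ψ) : ℂ).re
        = (inner ℂ ψ (a ψ) : ℂ).re - (inner ℂ ψ (V ψ) : ℂ).re := by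
      rw [hsum]; simp
    have hReA : (inner ℂ ψ (a ψ) : ℂ).re ≤ ‖z‖ * ‖ψ‖ ^ 2 + ‖ψ‖ * ‖φ‖ := by
      have h0 : (inner ℂ ψ (a ψ) : ℂ).re = z.re * ‖ψ‖ ^ 2 - (inner ℂ ψ φ : ℂ).re := by
        rw [haψ, inner_sub_right, inner_smul_right]
        have him : (inner ℂ ψ ψ : ℂ).im = 0 := inner_self_im (𝕜 := ℂ) ψ
        have hre' : (inner ℂ ψ ψ : ℂ).re = ‖ψ‖ ^ 2 := by
          simpa using inner_self_eq_norm_sq (𝕜 := ℂ) ψ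
        simp [Complex.sub_re, Complex.mul_re, him, hre']
        rw [← Complex.ofReal_pow, Complex.ofReal_re, Complex.ofReal_im]; ring
      have h2 : z.re ≤ ‖z‖ := Complex.re_le_norm z
      have h3 : -(inner ℂ ψ φ : ℂ).re ≤ ‖ψ‖ * ‖φ‖ := by
        have := norm_inner_le_norm (𝕜 := ℂ) ψ φ
        have habs : |(inner ℂ ψ φ : ℂ).re| ≤ ‖(inner ℂ ψ φ : ℂ)‖ := Complex.abs_re_le_norm _
        nlinarith [abs_nonneg (inner ℂ ψ φ : ℂ).re, neg_abs_le (inner ℂ ψ φ : ℂ).re]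
      have hψ2 : (0:ℝ) ≤ ‖ψ‖^2 := by positivity
      rw [h0]
      nlinarith
    have hReV : -(‖V‖ * ‖ψ‖ ^ 2) ≤ (inner ℂ ψ (V ψ) : ℂ).re := by
      have h1 : ‖(inner ℂ ψ (V ψ) : ℂ)‖ ≤ ‖ψ‖ * ‖V ψ‖ := norm_inner_le_norm ψ (V ψ)
      have h2 : ‖V ψ‖ ≤ ‖V‖ * ‖ψ‖ := V.le_opNorm ψ
      have h3 : |(inner ℂ ψ (V ψ) : ℂ).re| ≤ ‖(inner ℂ ψ (V ψ) : ℂ)‖ := Complex.abs_re_le_norm _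
      nlinarith [neg_abs_le (inner ℂ ψ (V ψ) : ℂ).re, norm_nonneg ψ]
    have hkey : ‖v ψ‖ ^ 2 ≤ C * ‖φ‖ ^ 2 := by
      have h1 := hform ψ
      have h2 : (inner ℂ ψ (Hop0 ψ) : ℂ).re + w * ‖ψ‖ ^ 2
          ≤ ‖ψ‖ * ‖φ‖ + (‖z‖ + ‖V‖ + w) * ‖ψ‖ ^ 2 := by
        rw [hre]; nlinarith
      have h3 : ‖ψ‖ * ‖φ‖ + (‖z‖ + ‖V‖ + w) * ‖ψ‖ ^ 2
          ≤ (1/d) * ‖φ‖^2 + (‖z‖ + ‖V‖ + w) * ((1/d) * ‖φ‖)^2 := by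
        have hzVw : (0:ℝ) ≤ ‖z‖ + ‖V‖ + w := by positivity
        have hψpos : (0:ℝ) ≤ ‖ψ‖ := norm_nonneg ψ
        have hφpos : (0:ℝ) ≤ ‖φ‖ := norm_nonneg φ
        have e1 : ‖ψ‖ * ‖φ‖ ≤ (1/d) * ‖φ‖ * ‖φ‖ := mul_le_mul_of_nonneg_right hψn hφpos
        have e2 : ‖ψ‖ ^ 2 ≤ ((1/d) * ‖φ‖) ^ 2 := pow_le_pow_left₀ hψpos hψn 2
        have e3 : (‖z‖ + ‖V‖ + w) * ‖ψ‖ ^ 2 ≤ (‖z‖ + ‖V‖ + w) * ((1/d) * ‖φ‖) ^ 2 :=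
          mul_le_mul_of_nonneg_left e2 hzVw
        nlinarith
      have h4 : (1/d) * ‖φ‖^2 + (‖z‖ + ‖V‖ + w) * ((1/d) * ‖φ‖)^2
          = (1 / d + (‖z‖ + ‖V‖ + w) / d ^ 2) * ‖φ‖ ^ 2 := by
        field_simp
      have h5 : (2/m) * ((inner ℂ ψ (Hop0 ψ) : ℂ).re + w * ‖ψ‖ ^ 2)
          ≤ (2/m) * ((1 / d + (‖z‖ + ‖V‖ + w) / d ^ 2) * ‖φ‖ ^ 2) := by
        apply mul_le_mul_of_nonneg_left _ (by positivity)
        rw [← h4]; exact le_trans h2 h3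
      calc ‖v ψ‖ ^ 2 ≤ _ := h1
        _ ≤ _ := h5
        _ = C * ‖φ‖ ^ 2 := by rw [hC_def]; ring
    have : ‖v ψ‖ ≤ Real.sqrt C * ‖φ‖ := by
      have h6 : ‖v ψ‖ ≤ Real.sqrt (C * ‖φ‖ ^ 2) := by
        rw [← Real.sqrt_sq (norm_nonneg (v ψ))]
        exact Real.sqrt_le_sqrt hkey
      rwa [Real.sqrt_mul hC, Real.sqrt_sq (norm_nonneg φ)] at h6
    exact this
  calc ‖v * R‖ ^ 2 ≤ Real.sqrt C ^ 2 := by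
        exact pow_le_pow_left₀ (norm_nonneg _) hmain 2
    _ = C := Real.sq_sqrt hC
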